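/- Let c : ℤ^d → ℤ be a finitary configuration with a nontrivial annihilator f = Σ_{v∈S} a_v X^v (integer coefficients, S = supp f), and let r be an integer such that f(X^n) annihilates c for all n coprime to r. Fix v₀ ∈ S and set g(X) = x₁⋯x_d · Π_{v∈S, v≠v₀} (X^{rv} − X^{rv₀}). Then g(Z) = 0 for every common root Z ∈ ℂ^d of all polynomials in the annihilator ideal Ann(c). -/
import Mathlib


/-- The polynomial `g(X) = x₁⋯x_d · Π_{v ∈ S, v ≠ v₀} (X^{rv} - X^{rv₀})` vanishes
on every common root of the annihilator ideal of `c`. -/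
theorem stmt_8 (d : ℕ) (c : (Fin d → ℤ) → ℤ) (hc : (Set.range c).Finite)
    (f : (Fin d → ℤ) →₀ ℤ) (hf : f ≠ 0)
    (hann : ∀ w : Fin d → ℤ, ∑ v ∈ f.support, f v * c (w + v) = 0)
    (r : ℕ) (hr : 0 < r)
    (hrexp : ∀ n : ℕ, 0 < n → n.Coprime r →
      ∀ w : Fin d → ℤ, ∑ v ∈ f.support, f v * c (w + n • v) = 0)
    (v₀ : Fin d → ℤ) (hv₀ : v₀ ∈ f.support)
    (Z : Fin d → ℂ)
    (hZ : ∀ h : MvPolynomial (Fin d) ℂ,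
      (∀ w : Fin d → ℤ,
        ∑ e ∈ h.support, h.coeff e * (c (w + fun i => (e i : ℤ)) : ℂ) = 0) →
      MvPolynomial.eval Z h = 0) :
    (∏ i, Z i) * ∏ v ∈ f.support.erase v₀,
      ((∏ i, Z i ^ ((r : ℤ) * v i)) - ∏ i, Z i ^ ((r : ℤ) * v₀ i)) = 0 := by
  by_cases hz : ∀ i, Z i ≠ 0
  case neg =>
    push_neg at hz
    obtain ⟨i, hi⟩ := hz
    rw [Finset.prod_eq_zero (Finset.mem_univ i) hi, zero_mul]
  set S := f.support with hS
  set W : (Fin d → ℤ) → ℂ := fun v => ∏ i, Z i ^ (v i) with hWdef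
  have hW0 : ∀ v, W v ≠ 0 := fun v =>
    Finset.prod_ne_zero_iff.2 fun i _ => zpow_ne_zero _ (hz i)
  have hpow : ∀ u : Fin d → ℤ, (∏ i, Z i ^ ((r : ℤ) * u i)) = W u ^ r := by
    intro u
    rw [hWdef]
    rw [← Finset.prod_pow]
    refine Finset.prod_congr rfl fun i _ => ?_
    rw [mul_comm, zpow_mul, zpow_natCast]
  -- Step 1
  have key : ∀ n : ℕ, 0 < n → n.Coprime r → ∑ v ∈ S, (f v : ℂ) * W v ^ n = 0 := by
    intro n hn hcop
    obtain ⟨N, hN⟩ : ∃ N : ℕ, ∀ v ∈ S, ∀ i, -(N : ℤ) ≤ v i := by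
      refine ⟨S.sup fun v => Finset.univ.sup fun i => (-(v i)).toNat, fun v hv i => ?_⟩
      have h1 : (-(v i)).toNat ≤ S.sup fun v => Finset.univ.sup fun i => (-(v i)).toNat :=
        le_trans (Finset.le_sup (f := fun i => (-(v i)).toNat) (Finset.mem_univ i))
          (Finset.le_sup (f := fun v => Finset.univ.sup fun i => (-(v i)).toNat) hv)
      have h2 : ((-(v i)).toNat : ℤ) ≤ _ := Int.ofNat_le.2 h1
      linarith [Int.self_le_toNat (-(v i))]
    have hnonneg : ∀ v ∈ S, ∀ i, (0 : ℤ) ≤ (n * N : ℕ) + n * v i := by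
      intro v hv i
      have := hN v hv i
      have hn' : (0 : ℤ) < n := by exact_mod_cast hn
      push_cast
      nlinarith [hN v hv i]
    set E : (Fin d → ℤ) → (Fin d →₀ ℕ) := fun v =>
      Finsupp.equivFunOnFinite.symm (fun i => ((n * N : ℕ) + n * v i).toNat) with hEdef
    have hEapp : ∀ v i, (E v) i = ((n * N : ℕ) + n * v i).toNat := fun v i => rfl
    have hEval : ∀ v ∈ S, ∀ i, ((E v i : ℤ)) = (n * N : ℕ) + n * v i := by
      intro v hv i
      rw [hEapp, Int.toNat_of_nonneg (hnonneg v hv i)]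
    have hEinj : ∀ v ∈ S, ∀ u ∈ S, E v = E u → v = u := by
      intro v hv u hu h
      funext i
      have h1 := hEval v hv i
      have h2 := hEval u hu i
      have : ((E v i : ℤ)) = ((E u i : ℤ)) := by rw [h]
      rw [h1, h2] at this
      have hn' : (n : ℤ) ≠ 0 := by exact_mod_cast hn.ne'
      have := add_left_cancel this
      exact mul_left_cancel₀ hn' this
    set h : MvPolynomial (Fin d) ℂ :=
      ∑ v ∈ S, MvPolynomial.monomial (E v) ((f v : ℂ)) with hhdef
    have hcoeff : ∀ v ∈ S, h.coeff (E v) = (f v : ℂ) := by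
      intro v hv
      rw [hhdef, MvPolynomial.coeff_sum]
      rw [Finset.sum_eq_single_of_mem v hv]
      · rw [MvPolynomial.coeff_monomial, if_pos rfl]
      · intro u hu hne
        rw [MvPolynomial.coeff_monomial, if_neg]
        intro hEq
        exact hne (hEinj u hu v hv hEq)
    have hsupp : h.support ⊆ S.image E := by
      refine (MvPolynomial.support_sum).trans ?_
      intro e he
      simp only [Finset.mem_biUnion] at he
      obtain ⟨v, hv, he⟩ := he
      have := MvPolynomial.support_monomial_subset he
      simp only [Finset.mem_singleton] at this
      exact Finset.mem_image.2 ⟨v, hv, this.symm⟩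
    have hann' : ∀ w : Fin d → ℤ,
        ∑ e ∈ h.support, h.coeff e * (c (w + fun i => (e i : ℤ)) : ℂ) = 0 := by
      intro w
      rw [Finset.sum_subset hsupp (fun e _ hne => by
        rw [MvPolynomial.notMem_support_iff.1 hne, zero_mul])]
      rw [Finset.sum_image (fun v hv u hu => hEinj v hv u hu)]
      have : ∀ v ∈ S, h.coeff (E v) * (c (w + fun i => ((E v i : ℤ))) : ℂ)
          = (f v : ℂ) * (c ((w + fun _ => ((n * N : ℕ) : ℤ)) + n • v) : ℂ) := by
        intro v hv
        have harg : (w + fun i => ((E v i : ℤ))) = (w + fun _ => ((n * N : ℕ) : ℤ)) + n • v := by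
          funext i
          simp only [Pi.add_apply, Pi.smul_apply, smul_eq_mul]
          rw [hEval v hv i]
          ring
        rw [hcoeff v hv, harg]
      rw [Finset.sum_congr rfl this]
      have h0 := hrexp n hn hcop (w + fun _ => ((n * N : ℕ) : ℤ))
      exact_mod_cast h0
    have heval := hZ h hann'
    rw [hhdef, map_sum] at heval
    have heval2 : ∀ v ∈ S,
        MvPolynomial.eval Z (MvPolynomial.monomial (E v) ((f v : ℂ)))
          = (f v : ℂ) * ((∏ i, Z i ^ ((n * N : ℕ) : ℤ)) * W v ^ n) := by
      intro v hv
      rw [MvPolynomial.eval_monomial]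
      congr 1
      rw [Finsupp.prod_fintype _ _ (fun i => pow_zero _)]
      have hterm : ∀ i, Z i ^ ((E v) i) = Z i ^ ((n * N : ℕ) : ℤ) * (Z i ^ (v i)) ^ n := by
        intro i
        rw [← zpow_natCast (Z i) (E v i), hEval v hv i, zpow_add₀ (hz i)]
        congr 1
        rw [mul_comm (n : ℤ), zpow_mul, zpow_natCast]
      rw [Finset.prod_congr rfl fun i _ => hterm i, Finset.prod_mul_distrib, Finset.prod_pow]
    rw [Finset.sum_congr rfl heval2] at heval
    have hC : (∏ i, Z i ^ ((n * N : ℕ) : ℤ)) ≠ 0 :=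
      Finset.prod_ne_zero_iff.2 fun i _ => zpow_ne_zero _ (hz i)
    have : (∏ i, Z i ^ ((n * N : ℕ) : ℤ)) * ∑ v ∈ S, (f v : ℂ) * W v ^ n = 0 := by
      rw [Finset.mul_sum]
      rw [← heval]
      exact Finset.sum_congr rfl fun v _ => by ring
    exact (mul_eq_zero.1 this).resolve_left hC
  -- Step 2
  have key2 : ∀ k : ℕ, ∑ v ∈ S, ((f v : ℂ) * W v) * (W v ^ r) ^ k = 0 := by
    intro k
    have hcop : (1 + k * r).Coprime r := (Nat.coprime_add_mul_right_left 1 r k).2 r.coprime_one_left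
    have := key (1 + k * r) (by omega) hcop
    rw [← this]
    refine Finset.sum_congr rfl fun v _ => ?_
    rw [pow_add, pow_one, pow_mul', mul_assoc]
  -- Step 3
  have key3 : ∀ p : Polynomial ℂ,
      ∑ v ∈ S, ((f v : ℂ) * W v) * p.eval (W v ^ r) = 0 := by
    intro p
    have : ∀ v ∈ S, ((f v : ℂ) * W v) * p.eval (W v ^ r)
        = ∑ j ∈ Finset.range (p.natDegree + 1),
            p.coeff j * (((f v : ℂ) * W v) * (W v ^ r) ^ j) := by
      intro v _
      rw [Polynomial.eval_eq_sum_range, Finset.mul_sum]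
      exact Finset.sum_congr rfl fun j _ => by ring
    rw [Finset.sum_congr rfl this, Finset.sum_comm]
    refine Finset.sum_eq_zero fun j _ => ?_
    rw [← Finset.mul_sum, key2 j, mul_zero]
  -- Step 4
  have hex : ∃ v ∈ S.erase v₀, W v ^ r = W v₀ ^ r := by
    by_contra hne
    push_neg at hne
    have h3 := key3 (∏ v ∈ S.erase v₀, (Polynomial.X - Polynomial.C (W v ^ r)))
    have hev : ∀ x : ℂ, Polynomial.eval x (∏ v ∈ S.erase v₀, (Polynomial.X - Polynomial.C (W v ^ r)))
        = ∏ v ∈ S.erase v₀, (x - W v ^ r) := by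
      intro x
      rw [Polynomial.eval_prod]
      exact Finset.prod_congr rfl fun v _ => by
        rw [Polynomial.eval_sub, Polynomial.eval_X, Polynomial.eval_C]
    rw [Finset.sum_eq_single_of_mem v₀ hv₀] at h3
    · rw [hev] at h3
      have h1 : (f v₀ : ℂ) ≠ 0 := Int.cast_ne_zero.2 (Finsupp.mem_support_iff.1 hv₀)
      have h2 : ∏ v ∈ S.erase v₀, (W v₀ ^ r - W v ^ r) ≠ 0 :=
        Finset.prod_ne_zero_iff.2 fun v hv => sub_ne_zero.2 fun h => hne v hv h.symm
      exact (mul_ne_zero (mul_ne_zero h1 (hW0 v₀)) h2) h3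
    · intro v hv hvne
      rw [hev, Finset.prod_eq_zero (Finset.mem_erase.2 ⟨hvne, hv⟩) (sub_self (W v ^ r)),
        mul_zero]
  obtain ⟨v, hv, heq⟩ := hex
  have hfac : (∏ i, Z i ^ ((r : ℤ) * v i)) - ∏ i, Z i ^ ((r : ℤ) * v₀ i) = 0 := by
    rw [hpow, hpow, heq, sub_self]
  rw [Finset.prod_eq_zero hv hfac, mul_zero]
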